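/- Let G be a finite simple graph with vertex set V. For every vertex v: the sum over all neighbors a of v of n2e(v,a) · n3(v,a) equals F8''(v) + 2·F9(v). -/

import Mathlib

open Finset
open scoped Classical

namespace FourProfiles

variable {V : Type*} [Fintype V] [DecidableEq V]

/-- Number of 3-element subsets of `V \ {v}` admitting a labeling `a, b, c` satisfying `P`. -/
noncomputable def cnt3 (v : V) (P : V → V → V → Prop) : ℕ :=
  (((Finset.univ : Finset V).powersetCard 3).filter
    (fun s => v ∉ s ∧ ∃ a ∈ s, ∃ b ∈ s, ∃ c ∈ s, s = {a, b, c} ∧ P a b c)).card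

variable (G : SimpleGraph V)

/-- Induced subgraph on `{v,a,b,c}` has exactly one edge, with `v` an endpoint. -/
noncomputable def F1 (v : V) : ℕ := cnt3 v fun a b c =>
  G.Adj v a ∧ ¬G.Adj v b ∧ ¬G.Adj v c ∧ ¬G.Adj a b ∧ ¬G.Adj a c ∧ ¬G.Adj b c

/-- Induced subgraph on `{v,a,b,c}` is a perfect matching (two disjoint edges). -/
noncomputable def F2 (v : V) : ℕ := cnt3 v fun a b c =>
  G.Adj v a ∧ G.Adj b c ∧ ¬G.Adj v b ∧ ¬G.Adj v c ∧ ¬G.Adj a b ∧ ¬G.Adj a c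

/-- Two-edge path plus isolated vertex, `v` an endpoint of the path. -/
noncomputable def F3 (v : V) : ℕ := cnt3 v fun a b c =>
  G.Adj v a ∧ G.Adj a b ∧ ¬G.Adj v b ∧ ¬G.Adj v c ∧ ¬G.Adj a c ∧ ¬G.Adj b c

/-- Two-edge path plus isolated vertex, `v` the middle vertex of the path. -/
noncomputable def F3' (v : V) : ℕ := cnt3 v fun a b c =>
  G.Adj v a ∧ G.Adj v b ∧ ¬G.Adj a b ∧ ¬G.Adj v c ∧ ¬G.Adj a c ∧ ¬G.Adj b c

/-- Path on four vertices, `v` an endpoint. -/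
noncomputable def F4 (v : V) : ℕ := cnt3 v fun a b c =>
  G.Adj v a ∧ G.Adj a b ∧ G.Adj b c ∧ ¬G.Adj v b ∧ ¬G.Adj v c ∧ ¬G.Adj a c

/-- Path on four vertices, `v` an internal (degree-2) vertex. -/
noncomputable def F4' (v : V) : ℕ := cnt3 v fun a b c =>
  G.Adj v a ∧ G.Adj v b ∧ G.Adj b c ∧ ¬G.Adj a b ∧ ¬G.Adj v c ∧ ¬G.Adj a c

/-- Triangle plus isolated vertex, `v` in the triangle. -/
noncomputable def F5 (v : V) : ℕ := cnt3 v fun a b c =>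
  G.Adj v a ∧ G.Adj v b ∧ G.Adj a b ∧ ¬G.Adj v c ∧ ¬G.Adj a c ∧ ¬G.Adj b c

/-- Star `K_{1,3}`, `v` a leaf. -/
noncomputable def F6 (v : V) : ℕ := cnt3 v fun a b c =>
  G.Adj v a ∧ G.Adj a b ∧ G.Adj a c ∧ ¬G.Adj v b ∧ ¬G.Adj v c ∧ ¬G.Adj b c

/-- Star `K_{1,3}`, `v` the center. -/
noncomputable def F6' (v : V) : ℕ := cnt3 v fun a b c =>
  G.Adj v a ∧ G.Adj v b ∧ G.Adj v c ∧ ¬G.Adj a b ∧ ¬G.Adj a c ∧ ¬G.Adj b c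

/-- 4-cycle. -/
noncomputable def F7 (v : V) : ℕ := cnt3 v fun a b c =>
  G.Adj v a ∧ G.Adj a b ∧ G.Adj b c ∧ G.Adj v c ∧ ¬G.Adj v b ∧ ¬G.Adj a c

/-- Paw (triangle with a pendant edge), `v` the pendant (degree-1) vertex. -/
noncomputable def F8 (v : V) : ℕ := cnt3 v fun a b c =>
  G.Adj v a ∧ G.Adj a b ∧ G.Adj a c ∧ G.Adj b c ∧ ¬G.Adj v b ∧ ¬G.Adj v c

/-- Paw, `v` the degree-3 vertex. -/
noncomputable def F8' (v : V) : ℕ := cnt3 v fun a b c =>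
  G.Adj v a ∧ G.Adj v b ∧ G.Adj a b ∧ G.Adj v c ∧ ¬G.Adj a c ∧ ¬G.Adj b c

/-- Paw, `v` one of the two degree-2 vertices. -/
noncomputable def F8'' (v : V) : ℕ := cnt3 v fun a b c =>
  G.Adj v a ∧ G.Adj v b ∧ G.Adj a b ∧ G.Adj a c ∧ ¬G.Adj v c ∧ ¬G.Adj b c

/-- Diamond (`K4` minus one edge), `v` one of the two degree-2 vertices. -/
noncomputable def F9 (v : V) : ℕ := cnt3 v fun a b c =>
  G.Adj v a ∧ G.Adj v b ∧ G.Adj a b ∧ G.Adj a c ∧ G.Adj b c ∧ ¬G.Adj v c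

/-- Diamond, `v` one of the two degree-3 vertices. -/
noncomputable def F9' (v : V) : ℕ := cnt3 v fun a b c =>
  G.Adj v a ∧ G.Adj v b ∧ G.Adj v c ∧ G.Adj a b ∧ G.Adj a c ∧ ¬G.Adj b c

/-- Complete graph `K4`. -/
noncomputable def F10 (v : V) : ℕ := cnt3 v fun a b c =>
  G.Adj v a ∧ G.Adj v b ∧ G.Adj v c ∧ G.Adj a b ∧ G.Adj a c ∧ G.Adj b c

/-- `|V \ (Γ(v) ∪ Γ(a))|`. -/
noncomputable def n1e (v a : V) : ℕ :=
  (Finset.univ.filter fun x => ¬G.Adj v x ∧ ¬G.Adj a x).card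

/-- `|Γ(v) \ (Γ(a) ∪ {a})|`. -/
noncomputable def n2c (v a : V) : ℕ :=
  (Finset.univ.filter fun x => G.Adj v x ∧ ¬G.Adj a x ∧ x ≠ a).card

/-- `|Γ(a) \ (Γ(v) ∪ {v})|`. -/
noncomputable def n2e (v a : V) : ℕ :=
  (Finset.univ.filter fun x => G.Adj a x ∧ ¬G.Adj v x ∧ x ≠ v).card

/-- `|Γ(v) ∩ Γ(a)|`. -/
noncomputable def n3 (v a : V) : ℕ :=
  (Finset.univ.filter fun x => G.Adj v x ∧ G.Adj a x).card

/-- Number of edges of `G` with neither endpoint in `Γ(v) ∪ {v}`. -/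
noncomputable def n1d (v : V) : ℕ :=
  (((Finset.univ : Finset V).powersetCard 2).filter
    (fun s => ∃ a ∈ s, ∃ b ∈ s, s = {a, b} ∧ G.Adj a b ∧
      ¬G.Adj v a ∧ ¬G.Adj v b ∧ a ≠ v ∧ b ≠ v)).card

/-- Number of triangles of `G` containing `a`. -/
noncomputable def tri (a : V) : ℕ :=
  (((Finset.univ : Finset V).powersetCard 2).filter
    (fun s => ∃ x ∈ s, ∃ y ∈ s, s = {x, y} ∧ G.Adj a x ∧ G.Adj a y ∧ G.Adj x y)).card

/-- Number of 2-element subsets `{x,y}` of `V \ {a}` inducing a two-edge path with `a`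
an endpoint. -/
noncomputable def twoPathEnd (a : V) : ℕ :=
  (((Finset.univ : Finset V).powersetCard 2).filter
    (fun s => a ∉ s ∧ ∃ x ∈ s, ∃ y ∈ s, s = {x, y} ∧ G.Adj a x ∧ G.Adj x y ∧ ¬G.Adj a y)).card

/-- Number of 2-element subsets `{b,c} ⊆ Γ(a)` with `b` adjacent to `c`, `b ∈ Γ(v)`,
`c ∈ Γ(v)`. -/
noncomputable def triIn (v a : V) : ℕ :=
  (((Finset.univ : Finset V).powersetCard 2).filter
    (fun s => ∃ b ∈ s, ∃ c ∈ s, s = {b, c} ∧ G.Adj a b ∧ G.Adj a c ∧ G.Adj b c ∧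
      G.Adj v b ∧ G.Adj v c)).card

/-- Number of 2-element subsets `{b,c} ⊆ Γ(a)` with `b` adjacent to `c`, `b ∉ Γ(v)`,
`c ∉ Γ(v)`. -/
noncomputable def triOut (v a : V) : ℕ :=
  (((Finset.univ : Finset V).powersetCard 2).filter
    (fun s => ∃ b ∈ s, ∃ c ∈ s, s = {b, c} ∧ G.Adj a b ∧ G.Adj a c ∧ G.Adj b c ∧
      ¬G.Adj v b ∧ ¬G.Adj v c)).card

theorem statement13 [DecidableRel G.Adj] (v : V) :
    ∑ a ∈ G.neighborFinset v, n2e G v a * n3 G v a = F8'' G v + 2 * F9 G v := by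
  classical
  set r : V → ℕ := fun x => ((Fintype.equivFin V) x : ℕ) with hrdef
  have rinj : Function.Injective r := by
    intro x y h
    exact (Fintype.equivFin V).injective (Fin.ext h)
  let T : Finset (V × V × V) := Finset.univ.filter (fun p => G.Adj v p.1 ∧ G.Adj v p.2.1 ∧
      G.Adj p.1 p.2.1 ∧ G.Adj p.1 p.2.2 ∧ ¬G.Adj v p.2.2 ∧ p.2.2 ≠ v)
  have memT : ∀ a b c : V, ((a, b, c) : V × V × V) ∈ T ↔ G.Adj v a ∧ G.Adj v b ∧
      G.Adj a b ∧ G.Adj a c ∧ ¬G.Adj v c ∧ c ≠ v := by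
    intro a b c; simp [T]
  -- Step 1 : sum = T.card
  have h1 : ∑ a ∈ G.neighborFinset v, n2e G v a * n3 G v a = T.card := by
    have hmaps : ∀ p ∈ T, p.1 ∈ G.neighborFinset v := by
      rintro ⟨a, b, c⟩ hp
      rw [memT] at hp
      simpa [SimpleGraph.mem_neighborFinset] using hp.1
    rw [Finset.card_eq_sum_card_fiberwise hmaps]
    refine Finset.sum_congr rfl ?_
    intro a ha
    rw [SimpleGraph.mem_neighborFinset] at ha
    rw [n2e, n3, ← Finset.card_product]
    refine Finset.card_nbij' (fun q : V × V => (a, q.2, q.1)) (fun p => (p.2.2, p.2.1))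
      ?_ ?_ ?_ ?_
    · rintro ⟨c, b⟩ hq
      simp only [Finset.mem_coe, Finset.mem_product, Finset.mem_filter, Finset.mem_univ, true_and] at hq
      exact Finset.mem_filter.mpr ⟨(memT a b c).mpr
        ⟨ha, hq.2.1, hq.2.2, hq.1.1, hq.1.2.1, hq.1.2.2⟩, rfl⟩
    · rintro ⟨a', b, c⟩ hp
      obtain ⟨hmem, heq⟩ := Finset.mem_filter.mp hp
      have heq' : a' = a := heq
      subst heq'
      obtain ⟨_, hvb, hab, hac, hvc, hcv⟩ := (memT a' b c).mp hmem
      simp only [Finset.mem_coe, Finset.mem_product, Finset.mem_filter, Finset.mem_univ, true_and]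
      exact ⟨⟨hac, hvc, hcv⟩, hvb, hab⟩
    · rintro ⟨c, b⟩ _; rfl
    · rintro ⟨a', b, c⟩ hp
      have heq' : a' = a := (Finset.mem_filter.mp hp).2
      subst heq'; rfl
  have h2 : T.card = (T.filter (fun p => ¬ G.Adj p.2.1 p.2.2)).card +
      (T.filter (fun p => G.Adj p.2.1 p.2.2)).card := by
    rw [Nat.add_comm]
    exact (Finset.card_filter_add_card_filter_not _).symm
  -- Step 3 : paw count
  have h3 : (T.filter (fun p => ¬ G.Adj p.2.1 p.2.2)).card = F8'' G v := by
    rw [F8'', cnt3]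
    refine Finset.card_nbij (fun p : V × V × V => ({p.1, p.2.1, p.2.2} : Finset V))
      ?_ ?_ ?_
    · rintro ⟨a, b, c⟩ hp
      obtain ⟨hmem, hbc⟩ := Finset.mem_filter.mp hp
      obtain ⟨hva, hvb, hab, hac, hvc, hcv⟩ := (memT a b c).mp hmem
      have hbc' : ¬ G.Adj b c := hbc
      have hab' : a ≠ b := G.ne_of_adj hab
      have hac' : a ≠ c := fun h => hvc (h ▸ hva)
      have hbcne : b ≠ c := fun h => hvc (h ▸ hvb)
      have hva' : v ≠ a := fun h => G.loopless.irrefl v (h ▸ hva)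
      have hvb' : v ≠ b := fun h => G.loopless.irrefl v (h ▸ hvb)
      simp only [Finset.mem_coe, Finset.mem_filter, Finset.mem_powersetCard, Finset.subset_univ, true_and]
      refine ⟨?_, ?_, a, ?_, b, ?_, c, ?_, rfl, hva, hvb, hab, hac, hvc, hbc'⟩
      · rw [Finset.card_insert_of_notMem (by simp [hab', hac']),
          Finset.card_insert_of_notMem (by simp [hbcne]), Finset.card_singleton]
      · simp [hva', hvb', Ne.symm hcv]
      all_goals simp
    · rintro ⟨a, b, c⟩ hp ⟨a', b', c'⟩ hp' heq
      obtain ⟨hmem, hbc⟩ := Finset.mem_filter.mp hp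
      obtain ⟨hmem', hbc'⟩ := Finset.mem_filter.mp hp'
      obtain ⟨hva, hvb, hab, hac, hvc, hcv⟩ := (memT a b c).mp hmem
      obtain ⟨hva', hvb', hab', hac', hvc', hcv'⟩ := (memT a' b' c').mp hmem'
      have hbcn : ¬ G.Adj b c := hbc
      have heq' : ({a, b, c} : Finset V) = {a', b', c'} := heq
      have hmemc : c' ∈ ({a, b, c} : Finset V) := by rw [heq']; simp
      have hcc : c' = c := by
        simp only [Finset.mem_insert, Finset.mem_singleton] at hmemc
        rcases hmemc with h | h | h
        · exact absurd (h ▸ hva) hvc'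
        · exact absurd (h ▸ hvb) hvc'
        · exact h
      have hmema : a' ∈ ({a, b, c} : Finset V) := by rw [heq']; simp
      have haa : a' = a := by
        simp only [Finset.mem_insert, Finset.mem_singleton] at hmema
        rcases hmema with h | h | h
        · exact h
        · exact absurd (h ▸ hcc ▸ hac') hbcn
        · exact absurd (h ▸ hva') hvc
      have hmemb : b' ∈ ({a, b, c} : Finset V) := by rw [heq']; simp
      have hbb : b' = b := by
        simp only [Finset.mem_insert, Finset.mem_singleton] at hmemb
        rcases hmemb with h | h | h
        · exact absurd (by rw [haa, h] at hab'; exact hab' : G.Adj a a) (G.loopless.irrefl a)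
        · exact h
        · exact absurd (h ▸ hvb') hvc
      subst haa; subst hbb; subst hcc; rfl
    · intro s hs
      simp only [Finset.mem_coe, Finset.mem_filter, Finset.mem_powersetCard,
        Finset.subset_univ, true_and] at hs
      obtain ⟨hps, hvs, a, has, b, hbs, c, hcs, hsabc, hva, hvb, hab, hac, hvc, hbc⟩ := hs
      refine ⟨(a, b, c), Finset.mem_filter.mpr ⟨(memT a b c).mpr
        ⟨hva, hvb, hab, hac, hvc, fun h => hvs (h ▸ hcs)⟩, hbc⟩, hsabc.symm⟩
  -- Step 4 : diamond count
  have h4a : (T.filter (fun p => G.Adj p.2.1 p.2.2)).card =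
      2 * ((T.filter (fun p => G.Adj p.2.1 p.2.2)).filter (fun p => r p.1 < r p.2.1)).card := by
    have hsplit := Finset.card_filter_add_card_filter_not
      (s := T.filter (fun p => G.Adj p.2.1 p.2.2)) (fun p => r p.1 < r p.2.1)
    have hswap : ((T.filter (fun p => G.Adj p.2.1 p.2.2)).filter
        (fun p => ¬ r p.1 < r p.2.1)).card =
        ((T.filter (fun p => G.Adj p.2.1 p.2.2)).filter (fun p => r p.1 < r p.2.1)).card := by
      refine Finset.card_nbij' (fun p : V × V × V => (p.2.1, p.1, p.2.2))
        (fun p => (p.2.1, p.1, p.2.2)) ?_ ?_ ?_ ?_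
      · rintro ⟨a, b, c⟩ hp
        obtain ⟨hp1, hlt⟩ := Finset.mem_filter.mp hp
        obtain ⟨hmem, hbc⟩ := Finset.mem_filter.mp hp1
        obtain ⟨hva, hvb, hab, hac, hvc, hcv⟩ := (memT a b c).mp hmem
        have hbcn : G.Adj b c := hbc
        have hltn : ¬ r a < r b := hlt
        have hne : r b ≠ r a := fun h => G.ne_of_adj hab (rinj h).symm
        exact Finset.mem_filter.mpr ⟨Finset.mem_filter.mpr ⟨(memT b a c).mpr
          ⟨hvb, hva, hab.symm, hbcn, hvc, hcv⟩, hac⟩, lt_of_le_of_ne (not_lt.mp hltn) hne⟩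
      · rintro ⟨a, b, c⟩ hp
        obtain ⟨hp1, hlt⟩ := Finset.mem_filter.mp hp
        obtain ⟨hmem, hbc⟩ := Finset.mem_filter.mp hp1
        obtain ⟨hva, hvb, hab, hac, hvc, hcv⟩ := (memT a b c).mp hmem
        have hbcn : G.Adj b c := hbc
        have hltn : r a < r b := hlt
        exact Finset.mem_filter.mpr ⟨Finset.mem_filter.mpr ⟨(memT b a c).mpr
          ⟨hvb, hva, hab.symm, hbcn, hvc, hcv⟩, hac⟩, not_lt.mpr (le_of_lt hltn)⟩
      · rintro ⟨a, b, c⟩ _; rfl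
      · rintro ⟨a, b, c⟩ _; rfl
    omega
  have h4b : ((T.filter (fun p => G.Adj p.2.1 p.2.2)).filter
      (fun p => r p.1 < r p.2.1)).card = F9 G v := by
    rw [F9, cnt3]
    refine Finset.card_nbij (fun p : V × V × V => ({p.1, p.2.1, p.2.2} : Finset V))
      ?_ ?_ ?_
    · rintro ⟨a, b, c⟩ hp
      obtain ⟨hp1, hlt⟩ := Finset.mem_filter.mp hp
      obtain ⟨hmem, hbc⟩ := Finset.mem_filter.mp hp1
      obtain ⟨hva, hvb, hab, hac, hvc, hcv⟩ := (memT a b c).mp hmem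
      have hbcn : G.Adj b c := hbc
      have hab' : a ≠ b := G.ne_of_adj hab
      have hac' : a ≠ c := fun h => hvc (h ▸ hva)
      have hbcne : b ≠ c := fun h => hvc (h ▸ hvb)
      have hva' : v ≠ a := fun h => G.loopless.irrefl v (h ▸ hva)
      have hvb' : v ≠ b := fun h => G.loopless.irrefl v (h ▸ hvb)
      simp only [Finset.mem_coe, Finset.mem_filter, Finset.mem_powersetCard, Finset.subset_univ, true_and]
      refine ⟨?_, ?_, a, ?_, b, ?_, c, ?_, rfl, hva, hvb, hab, hac, hbcn, hvc⟩
      · rw [Finset.card_insert_of_notMem (by simp [hab', hac']),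
          Finset.card_insert_of_notMem (by simp [hbcne]), Finset.card_singleton]
      · simp [hva', hvb', Ne.symm hcv]
      all_goals simp
    · rintro ⟨a, b, c⟩ hp ⟨a', b', c'⟩ hp' heq
      obtain ⟨hp1, hlt⟩ := Finset.mem_filter.mp hp
      obtain ⟨hmem, _⟩ := Finset.mem_filter.mp hp1
      obtain ⟨hp1', hlt'⟩ := Finset.mem_filter.mp hp'
      obtain ⟨hmem', _⟩ := Finset.mem_filter.mp hp1'
      obtain ⟨hva, hvb, hab, hac, hvc, hcv⟩ := (memT a b c).mp hmem
      obtain ⟨hva', hvb', hab', hac', hvc', hcv'⟩ := (memT a' b' c').mp hmem'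
      have hltn : r a < r b := hlt
      have hltn' : r a' < r b' := hlt'
      have heq' : ({a, b, c} : Finset V) = {a', b', c'} := heq
      have hmemc : c' ∈ ({a, b, c} : Finset V) := by rw [heq']; simp
      have hcc : c' = c := by
        simp only [Finset.mem_insert, Finset.mem_singleton] at hmemc
        rcases hmemc with h | h | h
        · exact absurd (h ▸ hva) hvc'
        · exact absurd (h ▸ hvb) hvc'
        · exact h
      have hmema : a' ∈ ({a, b, c} : Finset V) := by rw [heq']; simp
      have haa : a' = a := by
        simp only [Finset.mem_insert, Finset.mem_singleton] at hmema
        rcases hmema with h | h | h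
        · exact h
        · exfalso
          have hmemb : b' ∈ ({a, b, c} : Finset V) := by rw [heq']; simp
          simp only [Finset.mem_insert, Finset.mem_singleton] at hmemb
          rcases hmemb with h2 | h2 | h2
          · rw [h, h2] at hltn'
            exact absurd hltn' (not_lt.mpr (le_of_lt hltn))
          · exact absurd (by rw [h, h2] at hab'; exact hab' : G.Adj b b) (G.loopless.irrefl b)
          · exact absurd (h2 ▸ hvb') hvc
        · exact absurd (h ▸ hva') hvc
      have hmemb : b' ∈ ({a, b, c} : Finset V) := by rw [heq']; simp
      have hbb : b' = b := by
        simp only [Finset.mem_insert, Finset.mem_singleton] at hmemb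
        rcases hmemb with h | h | h
        · exact absurd (by rw [haa, h] at hab'; exact hab' : G.Adj a a) (G.loopless.irrefl a)
        · exact h
        · exact absurd (h ▸ hvb') hvc
      subst haa; subst hbb; subst hcc; rfl
    · intro s hs
      simp only [Finset.mem_coe, Finset.mem_filter, Finset.mem_powersetCard,
        Finset.subset_univ, true_and] at hs
      obtain ⟨hps, hvs, a, has, b, hbs, c, hcs, hsabc, hva, hvb, hab, hac, hbc, hvc⟩ := hs
      have hcv : c ≠ v := fun h => hvs (h ▸ hcs)
      have hab' : a ≠ b := G.ne_of_adj hab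
      rcases lt_or_gt_of_ne (fun h : r a = r b => hab' (rinj h)) with hlt | hlt
      · exact ⟨(a, b, c), Finset.mem_filter.mpr ⟨Finset.mem_filter.mpr ⟨(memT a b c).mpr
          ⟨hva, hvb, hab, hac, hvc, hcv⟩, hbc⟩, hlt⟩, hsabc.symm⟩
      · refine ⟨(b, a, c), Finset.mem_filter.mpr ⟨Finset.mem_filter.mpr ⟨(memT b a c).mpr
          ⟨hvb, hva, hab.symm, hbc, hvc, hcv⟩, hac⟩, hlt⟩, ?_⟩
        rw [hsabc]
        exact (Finset.insert_comm a b {c}).symm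
  rw [h1, h2, h3, h4a, h4b]

end FourProfiles
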